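/- In a ring with D, U satisfying DU − UD = 1, and for a natural number parameter l, Σ_{k=0}^{n} C(n+l,k) C(n+l,k+l) D^k U^n D^{n−k} = Σ_{j=0}^{n} C(n,j) · ((n+l)!/(n+l−j)!) · C(2n+2l−j, n−j) · U^{n−j} D^{n−j}. -/

import Mathlib

open Finset

lemma comm1 {A : Type*} [Ring A] (D U : A) (h : D * U - U * D = 1) (m : ℕ) :
    D * U ^ (m + 1) = U ^ (m + 1) * D + (m + 1 : ℕ) * U ^ m := by
  have hDU : D * U = U * D + 1 := by
    rw [sub_eq_iff_eq_add] at h; rw [h, add_comm]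
  induction m with
  | zero => simpa using hDU
  | succ m ih =>
    calc D * U ^ (m + 2) = (D * U ^ (m + 1)) * U := by rw [pow_succ, mul_assoc]
    _ = (U ^ (m + 1) * D + (m + 1 : ℕ) * U ^ m) * U := by rw [ih]
    _ = U ^ (m + 1) * (D * U) + (m + 1 : ℕ) * U ^ (m + 1) := by
        rw [add_mul, mul_assoc, mul_assoc, ← pow_succ]
    _ = U ^ (m + 2) * D + (m + 2 : ℕ) * U ^ (m + 1) := by
        rw [hDU]
        push_cast
        noncomm_ring

lemma comm' {A : Type*} [Ring A] (D U : A) (h : D * U - U * D = 1) (m : ℕ) :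
    D * U ^ m = U ^ m * D + (m : ℕ) * U ^ (m - 1) := by
  cases m with
  | zero => simp
  | succ m => simpa using comm1 D U h m

lemma normal {A : Type*} [Ring A] (D U : A) (h : D * U - U * D = 1) (n : ℕ) :
    ∀ k, D ^ k * U ^ n =
      ∑ j ∈ range (k + 1), ((k.choose j * n.descFactorial j : ℕ) : A) *
        (U ^ (n - j) * D ^ (k - j)) := by
  intro k
  induction k with
  | zero => simp
  | succ k ih =>
    have step : D ^ (k + 1) * U ^ n = D * (D ^ k * U ^ n) := by
      rw [pow_succ', mul_assoc]
    rw [step, ih, Finset.mul_sum]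
    have hterm : ∀ j ∈ range (k + 1),
        D * (((k.choose j * n.descFactorial j : ℕ) : A) * (U ^ (n - j) * D ^ (k - j))) =
        ((k.choose j * n.descFactorial j : ℕ) : A) * (U ^ (n - j) * D ^ (k + 1 - j))
        + ((k.choose j * n.descFactorial (j + 1) : ℕ) : A) * (U ^ (n - (j+1)) * D ^ (k + 1 - (j+1))) := by
      intro j hj
      rw [mem_range] at hj
      have hjk : j ≤ k := Nat.lt_succ_iff.mp hj
      have h1 : D * (((k.choose j * n.descFactorial j : ℕ) : A) * (U ^ (n - j) * D ^ (k - j)))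
          = ((k.choose j * n.descFactorial j : ℕ) : A) * ((D * U ^ (n - j)) * D ^ (k - j)) := by
        rw [← mul_assoc, ← (Nat.cast_commute (k.choose j * n.descFactorial j) D).eq, mul_assoc,
          ← mul_assoc D]
      rw [h1, comm' D U h]
      rw [add_mul, mul_add]
      congr 1
      · rw [mul_assoc, ← pow_succ']
        congr 3
        omega
      · have : k + 1 - (j + 1) = k - j := by omega
        rw [this]
        rw [Nat.descFactorial_succ,
          show k.choose j * ((n-j) * n.descFactorial j) = k.choose j * n.descFactorial j * (n-j) by ring,
          Nat.cast_mul (k.choose j * n.descFactorial j),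
          show n - (j+1) = n - j - 1 by omega]
        simp only [mul_assoc]
    rw [Finset.sum_congr rfl hterm, Finset.sum_add_distrib]
    -- RHS side
    rw [Finset.sum_range_succ' (fun j => ((((k+1).choose j * n.descFactorial j : ℕ) : A) *
        (U ^ (n - j) * D ^ (k + 1 - j)))) (k+1)]
    rw [show ∑ j ∈ range (k+1), ((k.choose j * n.descFactorial j : ℕ) : A) *
        (U ^ (n - j) * D ^ (k + 1 - j)) =
        (∑ j ∈ range (k+1), ((k.choose (j+1) * n.descFactorial (j+1) : ℕ) : A) *
        (U ^ (n - (j+1)) * D ^ (k + 1 - (j+1)))) + ((k.choose 0 * n.descFactorial 0 : ℕ) : A) *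
        (U ^ (n - 0) * D ^ (k + 1 - 0)) from ?_]
    · rw [add_right_comm, ← Finset.sum_add_distrib]
      congr 1
      · apply Finset.sum_congr rfl
        intro j _
        rw [Nat.choose_succ_succ, Nat.add_mul, Nat.cast_add, add_mul]
        exact add_comm _ _
      · simp
    · rw [Finset.sum_range_succ' (fun j => ((k.choose j * n.descFactorial j : ℕ) : A) *
        (U ^ (n - j) * D ^ (k + 1 - j))) k]
      rw [Finset.sum_range_succ (fun j => ((k.choose (j+1) * n.descFactorial (j+1) : ℕ) : A) *
        (U ^ (n - (j+1)) * D ^ (k + 1 - (j+1)))) k]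
      rw [Nat.choose_succ_self]
      simp

lemma natid (n l j : ℕ) (hj : j ≤ n) :
    ∑ k ∈ range (n + 1),
      (n + l).choose k * (n + l).choose (k + l) * (k.choose j * n.descFactorial j)
    = n.choose j * (n + l).descFactorial j * (2 * n + 2 * l - j).choose (n - j) := by
  set f : ℕ → ℕ := fun k =>
    (n + l).choose k * (n + l).choose (k + l) * (k.choose j * n.descFactorial j) with hf
  have split : ∑ k ∈ range (n + 1), f k = ∑ k ∈ Ico j (n + 1), f k := by
    rw [range_eq_Ico, ← Finset.sum_Ico_consecutive _ (Nat.zero_le j) (by omega : j ≤ n + 1)]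
    have : ∑ k ∈ Ico 0 j, f k = 0 := by
      apply Finset.sum_eq_zero
      intro k hk
      rw [mem_Ico] at hk
      simp [hf, Nat.choose_eq_zero_of_lt hk.2]
    rw [this, zero_add]
  rw [split, Finset.sum_Ico_eq_sum_range]
  have hterm : ∀ m ∈ range (n + 1 - j), f (j + m) =
      ((n + l).choose j * n.descFactorial j) * ((n + l - j).choose m * (n + l).choose (n - j - m)) := by
    intro m hm
    rw [mem_range] at hm
    have hm' : m ≤ n - j := by omega
    have h1 : (n + l).choose (j + m) * (j + m).choose j
        = (n + l).choose j * (n + l - j).choose m := by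
      have := Nat.choose_mul (n := n + l) (k := j + m) (s := j) (by omega)
      rwa [show j + m - j = m by omega] at this
    have h2 : (n + l).choose (j + m + l) = (n + l).choose (n - j - m) := by
      rw [show n - j - m = n + l - (j + m + l) by omega]
      exact (Nat.choose_symm (by omega)).symm
    rw [hf]
    simp only []
    rw [h2]
    calc (n + l).choose (j + m) * (n + l).choose (n - j - m) * ((j + m).choose j * n.descFactorial j)
        = ((n + l).choose (j + m) * (j + m).choose j) * n.descFactorial j * (n + l).choose (n - j - m) := by ring
      _ = ((n + l).choose j * (n + l - j).choose m) * n.descFactorial j * (n + l).choose (n - j - m) := by rw [h1]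
      _ = _ := by ring
  rw [Finset.sum_congr rfl hterm, ← Finset.mul_sum]
  have hvan : ∑ m ∈ range (n + 1 - j), (n + l - j).choose m * (n + l).choose (n - j - m)
      = (2 * n + 2 * l - j).choose (n - j) := by
    rw [show 2 * n + 2 * l - j = (n + l - j) + (n + l) by omega, Nat.add_choose_eq,
      Finset.Nat.sum_antidiagonal_eq_sum_range_succ_mk,
      show (n - j).succ = n + 1 - j by omega]
  rw [hvan]
  have hsw : (n + l).choose j * n.descFactorial j = n.choose j * (n + l).descFactorial j := by
    rw [Nat.descFactorial_eq_factorial_mul_choose, Nat.descFactorial_eq_factorial_mul_choose]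
    ring
  rw [hsw]

open Finset in
theorem stmt_14 {A : Type*} [Ring A] (D U : A) (h : D * U - U * D = 1) (n l : ℕ) :
    ∑ k ∈ range (n + 1), (((n + l).choose k * (n + l).choose (k + l) : ℕ) : A) *
        (D ^ k * U ^ n * D ^ (n - k)) =
    ∑ j ∈ range (n + 1),
      ((n.choose j * (n + l).descFactorial j * (2 * n + 2 * l - j).choose (n - j) : ℕ) : A) *
        (U ^ (n - j) * D ^ (n - j)) := by
  have key : ∀ k ∈ range (n + 1),
      (((n + l).choose k * (n + l).choose (k + l) : ℕ) : A) * (D ^ k * U ^ n * D ^ (n - k)) =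
      ∑ j ∈ range (n + 1),
        (((n + l).choose k * (n + l).choose (k + l) * (k.choose j * n.descFactorial j) : ℕ) : A) *
          (U ^ (n - j) * D ^ (n - j)) := by
    intro k hk
    rw [mem_range] at hk
    have hk' : k ≤ n := by omega
    rw [normal D U h n k, Finset.sum_mul, Finset.mul_sum]
    rw [← Finset.sum_subset (Finset.range_subset_range.mpr (by omega : k + 1 ≤ n + 1))
      (fun j hj hj' => ?_)]
    · apply Finset.sum_congr rfl
      intro j hj
      rw [mem_range] at hj
      have hj' : j ≤ k := by omega
      rw [mul_assoc ((k.choose j * n.descFactorial j : ℕ) : A), mul_assoc (U ^ (n - j)),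
        ← pow_add, show k - j + (n - k) = n - j by omega, ← mul_assoc, ← Nat.cast_mul]
    · rw [mem_range] at hj hj'
      have : k < j := by omega
      simp [Nat.choose_eq_zero_of_lt this]
  rw [Finset.sum_congr rfl key, Finset.sum_comm]
  apply Finset.sum_congr rfl
  intro j hj
  rw [mem_range] at hj
  rw [← Finset.sum_mul, ← Nat.cast_sum, natid n l j (by omega)]
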